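/- Let a be any integer tuple, and let a', a'' be splitting types of the same rank and the same degree with a' ≥ a'' in the balancedness partial order. Then hom(a,a') ≤ hom(a,a'') and hom(a',a) ≤ hom(a'',a). -/

import Mathlib

open Finset

/-- Degree of a 1-based integer tuple of rank `n`. -/
def degT (a : ℕ → ℤ) (n : ℕ) : ℤ := ∑ i ∈ Icc 1 n, a i

/-- `a` is weakly increasing on indices `1, …, n` (a splitting type of rank `n`). -/
def Incr (a : ℕ → ℤ) (n : ℕ) : Prop := ∀ i j : ℕ, 1 ≤ i → i ≤ j → j ≤ n → a i ≤ a j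

/-- `S(μ,ν) = Σ_{i=ν}^n a_i + Σ_{i=μ}^m b_i − Σ_{i=μ+ν−1}^{m+n} e_i`. -/
def Sfun (b e a : ℕ → ℤ) (m n μ ν : ℕ) : ℤ :=
  (∑ i ∈ Icc ν n, a i) + (∑ i ∈ Icc μ m, b i) - ∑ i ∈ Icc (μ + ν - 1) (m + n), e i

/-- `A(μ,ν) = a_ν − e_{μ+ν}`. -/
def Afun (e a : ℕ → ℤ) (μ ν : ℕ) : ℤ := a ν - e (μ + ν)

/-- `B(μ,ν) = e_{μ+ν−1} − b_μ`. -/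
def Bfun (b e : ℕ → ℤ) (μ ν : ℕ) : ℤ := e (μ + ν - 1) - b μ

/-- `h_μ = min{ν : 1 ≤ ν ≤ n+1, S(μ,ν') < 0 for all ν' with ν < ν' ≤ n+1}`. -/
noncomputable def hfun (b e a : ℕ → ℤ) (m n μ : ℕ) : ℕ :=
  sInf {ν : ℕ | 1 ≤ ν ∧ ν ≤ n + 1 ∧ ∀ ν', ν < ν' → ν' ≤ n + 1 → Sfun b e a m n μ ν' < 0}

/-- Weak eligibility of a triple `(b,e,a)` of ranks `m, m+n, n`. -/
def WeaklyEligible (b e a : ℕ → ℤ) (m n : ℕ) : Prop :=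
  degT a n + degT b m = degT e (m + n) ∧
  (∀ i, 1 ≤ i → i ≤ n → e i ≤ a i) ∧
  (∀ i, 1 ≤ i → i ≤ m → b i ≤ e (n + i))

/-- The realizability criterion: weakly eligible, and `A(μ,ν) ≥ 0`, `B(μ,ν) ≥ 0`
whenever `1 ≤ μ ≤ m`, `1 ≤ ν ≤ n` and `ν ≥ h_μ`. -/
def RealizCrit (b e a : ℕ → ℤ) (m n : ℕ) : Prop :=
  WeaklyEligible b e a m n ∧
  ∀ μ ν, 1 ≤ μ → μ ≤ m → 1 ≤ ν → ν ≤ n → hfun b e a m n μ ≤ ν →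
    0 ≤ Afun e a μ ν ∧ 0 ≤ Bfun b e μ ν

/-- `f ≥ g` in the balancedness partial order (for tuples of rank `n`):
all prefix sums of `f` dominate those of `g`. -/
def MoreBal (f g : ℕ → ℤ) (n : ℕ) : Prop :=
  ∀ k, k ≤ n → (∑ i ∈ Icc 1 k, g i) ≤ ∑ i ∈ Icc 1 k, f i

/-- `f > g` in the balancedness partial order: `f ≥ g` and `f ≠ g` (on indices `1..n`). -/
def StrictMoreBal (f g : ℕ → ℤ) (n : ℕ) : Prop :=
  MoreBal f g n ∧ ∃ i, 1 ≤ i ∧ i ≤ n ∧ f i ≠ g i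

/-- `hom(u,v) = Σ_i Σ_j max(0, v_j − u_i + 1)`, the dimension of
`Hom(O(u), O(v))` on `P¹`. -/
def homT (u : ℕ → ℤ) (p : ℕ) (v : ℕ → ℤ) (q : ℕ) : ℤ :=
  ∑ i ∈ Icc 1 p, ∑ j ∈ Icc 1 q, max 0 (v j - u i + 1)

lemma maxsum_eq (n : ℕ) (t : ℤ) (b : ℕ → ℤ) :
    ∑ j ∈ Icc 1 n, max 0 (b j - t)
      = ∑ j ∈ (Icc 1 n).filter (fun j => 0 < b j - t), (b j - t) := by
  rw [Finset.sum_filter]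
  apply Finset.sum_congr rfl
  intro j _
  rcases lt_or_ge 0 (b j - t) with h | h
  · simp [h, max_eq_right h.le]; omega
  · simp [not_lt.2 h, max_eq_left h]; omega

lemma suffix_sum_le (n m : ℕ) (hm : 1 ≤ m) (hmn : m ≤ n + 1) (a' a'' : ℕ → ℤ)
    (hdeg : degT a' n = degT a'' n) (hbal : MoreBal a' a'' n) :
    (∑ j ∈ Icc m n, a' j) ≤ ∑ j ∈ Icc m n, a'' j := by
  have key : ∀ b : ℕ → ℤ,
      (∑ j ∈ Icc 1 (m - 1), b j) + ∑ j ∈ Icc m n, b j = ∑ j ∈ Icc 1 n, b j := by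
    intro b
    have h0 : Icc 1 (m-1) = Ioc 0 (m-1) := by rw [← Finset.Icc_add_one_left_eq_Ioc]; rfl
    have h1 : Icc m n = Ioc (m-1) n := by
      rw [← Finset.Icc_add_one_left_eq_Ioc]
      congr 1
      omega
    have h2 : Icc 1 n = Ioc 0 n := by rw [← Finset.Icc_add_one_left_eq_Ioc]; rfl
    rw [h0, h1, h2]
    exact Finset.sum_Ioc_consecutive b (Nat.zero_le _) (by omega)
  have hb := hbal (m-1) (by omega)
  have k1 := key a'
  have k2 := key a''
  unfold degT at hdeg
  linarith

lemma lemA (n : ℕ) (t : ℤ) (a' a'' : ℕ → ℤ) (h1 : Incr a' n)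
    (hdeg : degT a' n = degT a'' n) (hbal : MoreBal a' a'' n) :
    (∑ j ∈ Icc 1 n, max 0 (a' j - t)) ≤ ∑ j ∈ Icc 1 n, max 0 (a'' j - t) := by
  rw [maxsum_eq]
  set S := (Icc 1 n).filter (fun j => 0 < a' j - t) with hSdef
  rcases S.eq_empty_or_nonempty with hSe | hSne
  · rw [hSe]
    simp only [Finset.sum_empty]
    exact Finset.sum_nonneg fun j _ => le_max_left _ _
  · set m := S.min' hSne with hmdef
    have hmS : m ∈ S := S.min'_mem hSne
    have hm1 : 1 ≤ m := (Finset.mem_Icc.1 (Finset.mem_filter.1 hmS).1).1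
    have hmn : m ≤ n := (Finset.mem_Icc.1 (Finset.mem_filter.1 hmS).1).2
    have hmt : 0 < a' m - t := (Finset.mem_filter.1 hmS).2
    have hSI : S = Icc m n := by
      ext j
      simp only [hSdef, Finset.mem_filter, Finset.mem_Icc]
      constructor
      · rintro ⟨⟨_, hjn⟩, hjt⟩
        exact ⟨S.min'_le j (Finset.mem_filter.2 ⟨Finset.mem_Icc.2 ⟨by omega, hjn⟩, hjt⟩), hjn⟩
      · rintro ⟨hmj, hjn⟩
        refine ⟨⟨by omega, hjn⟩, ?_⟩
        have := h1 m j hm1 hmj hjn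
        linarith
    rw [hSI]
    calc (∑ j ∈ Icc m n, (a' j - t)) ≤ ∑ j ∈ Icc m n, (a'' j - t) := by
          rw [Finset.sum_sub_distrib, Finset.sum_sub_distrib]
          have := suffix_sum_le n m hm1 (by omega) a' a'' hdeg hbal
          linarith
      _ ≤ ∑ j ∈ Icc m n, max 0 (a'' j - t) :=
          Finset.sum_le_sum fun j _ => le_max_right _ _
      _ ≤ ∑ j ∈ Icc 1 n, max 0 (a'' j - t) := by
          apply Finset.sum_le_sum_of_subset_of_nonneg
          · apply Finset.Icc_subset_Icc_left; omega
          · intro j _ _; exact le_max_left _ _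

lemma lemB (n : ℕ) (t : ℤ) (a' a'' : ℕ → ℤ) (h1 : Incr a' n)
    (hbal : MoreBal a' a'' n) :
    (∑ j ∈ Icc 1 n, max 0 (t - a' j)) ≤ ∑ j ∈ Icc 1 n, max 0 (t - a'' j) := by
  have : ∀ b : ℕ → ℤ, ∑ j ∈ Icc 1 n, max 0 (t - b j)
      = ∑ j ∈ (Icc 1 n).filter (fun j => 0 < t - b j), (t - b j) := by
    intro b
    rw [Finset.sum_filter]
    apply Finset.sum_congr rfl
    intro j _
    rcases lt_or_ge 0 (t - b j) with h | h
    · simp [h, max_eq_right h.le]; omega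
    · simp [not_lt.2 h, max_eq_left h]; omega
  rw [this a']
  set S := (Icc 1 n).filter (fun j => 0 < t - a' j) with hSdef
  rcases S.eq_empty_or_nonempty with hSe | hSne
  · rw [hSe]
    simp only [Finset.sum_empty]
    exact Finset.sum_nonneg fun j _ => le_max_left _ _
  · set k := S.max' hSne with hkdef
    have hkS : k ∈ S := S.max'_mem hSne
    have hk1 : 1 ≤ k := (Finset.mem_Icc.1 (Finset.mem_filter.1 hkS).1).1
    have hkn : k ≤ n := (Finset.mem_Icc.1 (Finset.mem_filter.1 hkS).1).2
    have hkt : 0 < t - a' k := (Finset.mem_filter.1 hkS).2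
    have hSI : S = Icc 1 k := by
      ext j
      simp only [hSdef, Finset.mem_filter, Finset.mem_Icc]
      constructor
      · rintro ⟨⟨hj1, hjn⟩, hjt⟩
        exact ⟨hj1, S.le_max' j (Finset.mem_filter.2 ⟨Finset.mem_Icc.2 ⟨hj1, hjn⟩, hjt⟩)⟩
      · rintro ⟨hj1, hjk⟩
        refine ⟨⟨hj1, by omega⟩, ?_⟩
        have := h1 j k hj1 hjk hkn
        linarith
    rw [hSI]
    calc (∑ j ∈ Icc 1 k, (t - a' j)) ≤ ∑ j ∈ Icc 1 k, (t - a'' j) := by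
          rw [Finset.sum_sub_distrib, Finset.sum_sub_distrib]
          have := hbal k hkn
          linarith
      _ ≤ ∑ j ∈ Icc 1 k, max 0 (t - a'' j) :=
          Finset.sum_le_sum fun j _ => le_max_right _ _
      _ ≤ ∑ j ∈ Icc 1 n, max 0 (t - a'' j) := by
          apply Finset.sum_le_sum_of_subset_of_nonneg
          · exact Finset.Icc_subset_Icc_right hkn
          · intro j _ _; exact le_max_left _ _

/-- If `a' ≥ a''` in the balancedness partial order (same rank and degree),
then `hom(a,a') ≤ hom(a,a'')` and `hom(a',a) ≤ hom(a'',a)` for any tuple `a`. -/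
theorem stmt6 (p n : ℕ) (u a' a'' : ℕ → ℤ)
    (h1 : Incr a' n) (h2 : Incr a'' n)
    (hdeg : degT a' n = degT a'' n) (hbal : MoreBal a' a'' n) :
    homT u p a' n ≤ homT u p a'' n ∧ homT a' n u p ≤ homT a'' n u p := by
  constructor
  · unfold homT
    apply Finset.sum_le_sum
    intro i _
    have := lemA n (u i - 1) a' a'' h1 hdeg hbal
    calc ∑ j ∈ Icc 1 n, max 0 (a' j - u i + 1)
        = ∑ j ∈ Icc 1 n, max 0 (a' j - (u i - 1)) := by
          apply Finset.sum_congr rfl; intro j _; ring_nf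
      _ ≤ ∑ j ∈ Icc 1 n, max 0 (a'' j - (u i - 1)) := this
      _ = ∑ j ∈ Icc 1 n, max 0 (a'' j - u i + 1) := by
          apply Finset.sum_congr rfl; intro j _; ring_nf
  · unfold homT
    rw [Finset.sum_comm, Finset.sum_comm (s := Icc 1 n)]
    apply Finset.sum_le_sum
    intro j _
    have := lemB n (u j + 1) a' a'' h1 hbal
    calc ∑ i ∈ Icc 1 n, max 0 (u j - a' i + 1)
        = ∑ i ∈ Icc 1 n, max 0 ((u j + 1) - a' i) := by
          apply Finset.sum_congr rfl; intro i _; ring_nf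
      _ ≤ ∑ i ∈ Icc 1 n, max 0 ((u j + 1) - a'' i) := this
      _ = ∑ i ∈ Icc 1 n, max 0 (u j - a'' i + 1) := by
          apply Finset.sum_congr rfl; intro i _; ring_nf
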